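/- Let (U^{(1)}_n), (U^{(2)}_n) be two sequences of positive reals and (V_n) a sequence of positive reals. For i ∈ {1,2} define S^{(i)} and κ_t^{(i)}, N_t^{(i)} as in the two-type renewal setting, and set Δ_m = max{ |t − t'| : Σ_{n<m} U^{(1)}_n ≤ t ≤ Σ_{n≤m} U^{(1)}_n, Σ_{n<m} U^{(2)}_n ≤ t' ≤ Σ_{n≤m} U^{(2)}_n }. Then for every t > 0, |κ_t^{(2)} − κ_t^{(1)}| ≤ max_{0 ≤ m ≤ N_t^{(1)}} Δ_m. -/

import Mathlib

open Finset MeasureTheory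

/-- Time spent in u-phases before time `t` for the two-type renewal sequence with
u-durations `U` and v-durations `V`: the Lebesgue measure of
`[0,t] ∩ ∪_n [S_{2n}, S_{2n+1}]` where `S_{2n} = Σ_{k<n} (U_k + V_k)`,
`S_{2n+1} = S_{2n} + U_n`. -/
noncomputable def kappa (U V : ℕ → ℝ) (t : ℝ) : ℝ :=
  (volume {s : ℝ | 0 ≤ s ∧ s ≤ t ∧ ∃ n : ℕ,
    (∑ k ∈ range n, (U k + V k)) ≤ s ∧ s ≤ (∑ k ∈ range n, (U k + V k)) + U n}).toReal

/-- `Δ_m`: the maximal discrepancy `|a − b|` over `a` in the `m`-th u-interval (in internal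
time) of process 1 and `b` in that of process 2. -/
noncomputable def Delta (U₁ U₂ : ℕ → ℝ) (m : ℕ) : ℝ :=
  sSup {r : ℝ | ∃ a b : ℝ,
    (∑ n ∈ range m, U₁ n) ≤ a ∧ a ≤ (∑ n ∈ range (m + 1), U₁ n) ∧
    (∑ n ∈ range m, U₂ n) ≤ b ∧ b ≤ (∑ n ∈ range (m + 1), U₂ n) ∧ r = |a - b|}

lemma sum_range_mono {f : ℕ → ℝ} (hf : ∀ n, 0 ≤ f n) {m n : ℕ} (h : m ≤ n) :
    ∑ k ∈ range m, f k ≤ ∑ k ∈ range n, f k :=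
  Finset.sum_le_sum_of_subset_of_nonneg (Finset.range_subset_range.2 h) (fun i _ _ => hf i)

lemma kappa_eq_tsum {U V : ℕ → ℝ} (hU : ∀ n, 0 < U n) (hV : ∀ n, 0 < V n) (t : ℝ) :
    kappa U V t =
      (∑' n, ENNReal.ofReal
        (min ((∑ k ∈ range n, (U k + V k)) + U n) t - ∑ k ∈ range n, (U k + V k))).toReal := by
  unfold kappa
  set C : ℕ → ℝ := fun n => ∑ k ∈ range n, (U k + V k) with hC
  have hC0 : ∀ n, 0 ≤ C n := fun n =>
    Finset.sum_nonneg fun k _ => by have := hU k; have := hV k; linarith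
  have hCstep : ∀ n, C n + U n < C (n + 1) := by
    intro n
    have : C (n + 1) = C n + (U n + V n) := by
      simp [hC, Finset.sum_range_succ]
    rw [this]; linarith [hV n]
  have hCmono : ∀ {m n : ℕ}, m ≤ n → C m ≤ C n := fun h =>
    sum_range_mono (fun k => by have := hU k; have := hV k; linarith) h
  have hset : {s : ℝ | 0 ≤ s ∧ s ≤ t ∧ ∃ n, C n ≤ s ∧ s ≤ C n + U n}
      = ⋃ n, Set.Icc (C n) (min (C n + U n) t) := by
    ext s
    simp only [Set.mem_setOf_eq, Set.mem_iUnion, Set.mem_Icc, le_min_iff]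
    constructor
    · rintro ⟨h0, h1, n, h2, h3⟩; exact ⟨n, h2, h3, h1⟩
    · rintro ⟨n, h2, h3, h4⟩; exact ⟨le_trans (hC0 n) h2, h4, n, h2, h3⟩
  have key : ∀ i j : ℕ, i < j →
      Disjoint (Set.Icc (C i) (min (C i + U i) t)) (Set.Icc (C j) (min (C j + U j) t)) := by
    intro i j hij
    refine Set.disjoint_left.2 ?_
    rintro s ⟨h1, h2⟩ ⟨h3, h4⟩
    have hlt : C i + U i < C j := lt_of_lt_of_le (hCstep i) (hCmono hij)
    have := le_trans h2 (min_le_left _ _)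
    linarith
  have hdisj : Pairwise (Function.onFun Disjoint
      fun n => Set.Icc (C n) (min (C n + U n) t)) := by
    intro i j hij
    rcases hij.lt_or_gt with h | h
    · exact key i j h
    · exact (key j i h).symm
  rw [hset, measure_iUnion hdisj (fun n => measurableSet_Icc)]
  congr 1
  exact tsum_congr fun n => by rw [Real.volume_Icc]

lemma kappa_eq_min {U V : ℕ → ℝ} (hU : ∀ n, 0 < U n) (hV : ∀ n, 0 < V n) {t : ℝ}
    (N : ℕ) (h1 : ∑ k ∈ range N, (U k + V k) ≤ t)
    (h2 : t < ∑ k ∈ range (N + 1), (U k + V k)) :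
    kappa U V t = min (t - ∑ k ∈ range N, V k) (∑ k ∈ range (N + 1), U k) := by
  rw [kappa_eq_tsum hU hV]
  set C : ℕ → ℝ := fun n => ∑ k ∈ range n, (U k + V k) with hC
  have hCmono : ∀ {m n : ℕ}, m ≤ n → C m ≤ C n := fun h =>
    sum_range_mono (fun k => by have := hU k; have := hV k; linarith) h
  have hCstep : ∀ n, C n + U n < C (n + 1) := by
    intro n
    have : C (n + 1) = C n + (U n + V n) := by simp [hC, Finset.sum_range_succ]
    rw [this]; linarith [hV n]
  have hzero : ∀ n ∉ range (N + 1),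
      ENNReal.ofReal (min (C n + U n) t - C n) = 0 := by
    intro n hn
    rw [Finset.mem_range, not_lt] at hn
    have h3 : t < C n := lt_of_lt_of_le h2 (hCmono hn)
    have h4 : min (C n + U n) t ≤ t := min_le_right _ _
    exact ENNReal.ofReal_eq_zero.2 (by linarith)
  rw [tsum_eq_sum hzero, ENNReal.toReal_sum (fun n _ => ENNReal.ofReal_ne_top)]
  have hterm : ∀ n ∈ range (N + 1),
      (ENNReal.ofReal (min (C n + U n) t - C n)).toReal = min (C n + U n) t - C n := by
    intro n hn
    rw [Finset.mem_range, Nat.lt_succ_iff] at hn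
    have hCt : C n ≤ t := le_trans (hCmono hn) h1
    have : C n ≤ min (C n + U n) t := le_min (by linarith [hU n]) hCt
    exact ENNReal.toReal_ofReal (by linarith)
  rw [Finset.sum_congr rfl hterm, Finset.sum_range_succ]
  have hfull : ∀ n ∈ range N, min (C n + U n) t - C n = U n := by
    intro n hn
    rw [Finset.mem_range] at hn
    have : C n + U n ≤ t := le_trans (le_of_lt (hCstep n)) (le_trans (hCmono hn) h1)
    rw [min_eq_left this]; ring
  rw [Finset.sum_congr rfl hfull]
  have hCN : C N = (∑ k ∈ range N, U k) + ∑ k ∈ range N, V k := by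
    simp [hC, Finset.sum_add_distrib]
  have hAN : (∑ k ∈ range (N + 1), U k) = (∑ k ∈ range N, U k) + U N :=
    Finset.sum_range_succ _ _
  rcases le_total (C N + U N) t with h | h
  · rw [min_eq_left h, min_eq_right (by rw [hAN]; linarith [hCN ▸ h])]
    rw [hAN]; linarith [hCN]
  · rw [min_eq_right h, min_eq_left (by rw [hAN]; linarith [hCN ▸ h])]
    linarith [hCN]

lemma kappa_eq_deg {U V : ℕ → ℝ} (hU : ∀ n, 0 < U n) (hV : ∀ n, 0 < V n) {t : ℝ}
    (hall : ∀ n, ∑ k ∈ range n, (U k + V k) ≤ t) :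
    kappa U V t = ∑' n, U n := by
  rw [kappa_eq_tsum hU hV]
  set C : ℕ → ℝ := fun n => ∑ k ∈ range n, (U k + V k) with hC
  have hCstep : ∀ n, C n + U n < C (n + 1) := by
    intro n
    have : C (n + 1) = C n + (U n + V n) := by simp [hC, Finset.sum_range_succ]
    rw [this]; linarith [hV n]
  have hterm : ∀ n : ℕ, min (C n + U n) t - C n = U n := by
    intro n
    rw [min_eq_left (le_trans (le_of_lt (hCstep n)) (hall (n + 1)))]; ring
  have hsum : Summable U := by
    apply summable_of_sum_range_le (c := t) (fun n => le_of_lt (hU n))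
    intro n
    calc ∑ i ∈ range n, U i ≤ ∑ i ∈ range n, (U i + V i) :=
          Finset.sum_le_sum fun i _ => by linarith [hV i]
      _ ≤ t := hall n
  calc (∑' n, ENNReal.ofReal (min (C n + U n) t - C n)).toReal
      = (∑' n, ENNReal.ofReal (U n)).toReal := by
        congr 1; exact tsum_congr fun n => by rw [hterm]
    _ = ∑' n, U n := by
        rw [← ENNReal.ofReal_tsum_of_nonneg (fun n => le_of_lt (hU n)) hsum,
          ENNReal.toReal_ofReal (tsum_nonneg fun n => le_of_lt (hU n))]

lemma delta_bddAbove {U₁ U₂ : ℕ → ℝ} (hU₁ : ∀ n, 0 < U₁ n) (hU₂ : ∀ n, 0 < U₂ n) (m : ℕ) :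
    BddAbove {r : ℝ | ∃ a b : ℝ,
      (∑ n ∈ range m, U₁ n) ≤ a ∧ a ≤ (∑ n ∈ range (m + 1), U₁ n) ∧
      (∑ n ∈ range m, U₂ n) ≤ b ∧ b ≤ (∑ n ∈ range (m + 1), U₂ n) ∧ r = |a - b|} := by
  refine ⟨max (∑ n ∈ range (m + 1), U₁ n) (∑ n ∈ range (m + 1), U₂ n), ?_⟩
  rintro r ⟨a, b, h1, h2, h3, h4, rfl⟩
  have ha0 : 0 ≤ a := le_trans (Finset.sum_nonneg fun n _ => le_of_lt (hU₁ n)) h1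
  have hb0 : 0 ≤ b := le_trans (Finset.sum_nonneg fun n _ => le_of_lt (hU₂ n)) h3
  rw [abs_sub_le_iff]
  constructor
  · calc a - b ≤ a := by linarith
      _ ≤ _ := le_trans h2 (le_max_left _ _)
  · calc b - a ≤ b := by linarith
      _ ≤ _ := le_trans h4 (le_max_right _ _)

lemma le_Delta {U₁ U₂ : ℕ → ℝ} (hU₁ : ∀ n, 0 < U₁ n) (hU₂ : ∀ n, 0 < U₂ n) (m : ℕ)
    {a b : ℝ} (h1 : (∑ n ∈ range m, U₁ n) ≤ a) (h2 : a ≤ ∑ n ∈ range (m + 1), U₁ n)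
    (h3 : (∑ n ∈ range m, U₂ n) ≤ b) (h4 : b ≤ ∑ n ∈ range (m + 1), U₂ n) :
    |a - b| ≤ Delta U₁ U₂ m :=
  le_csSup (delta_bddAbove hU₁ hU₂ m) ⟨a, b, h1, h2, h3, h4, rfl⟩

lemma Delta_facts {U₁ U₂ : ℕ → ℝ} (hU₁ : ∀ n, 0 < U₁ n) (hU₂ : ∀ n, 0 < U₂ n) (m : ℕ) :
    0 ≤ Delta U₁ U₂ m ∧
    (∑ n ∈ range (m + 1), U₁ n) - (∑ n ∈ range m, U₂ n) ≤ Delta U₁ U₂ m ∧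
    (∑ n ∈ range (m + 1), U₂ n) - (∑ n ∈ range m, U₁ n) ≤ Delta U₁ U₂ m := by
  have hm1 : (∑ n ∈ range m, U₁ n) ≤ ∑ n ∈ range (m + 1), U₁ n :=
    sum_range_mono (fun n => le_of_lt (hU₁ n)) (Nat.le_succ m)
  have hm2 : (∑ n ∈ range m, U₂ n) ≤ ∑ n ∈ range (m + 1), U₂ n :=
    sum_range_mono (fun n => le_of_lt (hU₂ n)) (Nat.le_succ m)
  refine ⟨?_, ?_, ?_⟩
  · exact le_trans (abs_nonneg _) (le_Delta hU₁ hU₂ m le_rfl hm1 le_rfl hm2)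
  · exact le_trans (le_abs_self _) (le_Delta hU₁ hU₂ m hm1 le_rfl le_rfl hm2)
  · have h := le_Delta hU₁ hU₂ m le_rfl hm1 hm2 le_rfl
    have h2 := neg_le_abs ((∑ n ∈ range m, U₁ n) - ∑ n ∈ range (m + 1), U₂ n)
    linarith

lemma exists_renewal_index {f : ℕ → ℝ} {t : ℝ} (ht : 0 ≤ t)
    (h : ∃ n, t < ∑ k ∈ range n, f k) :
    ∃ N, (∑ k ∈ range N, f k) ≤ t ∧ t < ∑ k ∈ range (N + 1), f k := by
  have hex : ∃ n, t < ∑ k ∈ range (n + 1), f k := by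
    obtain ⟨n, hn⟩ := h
    cases n with
    | zero => simp at hn; linarith
    | succ m => exact ⟨m, hn⟩
  refine ⟨Nat.find hex, ?_, Nat.find_spec hex⟩
  rcases Nat.eq_zero_or_pos (Nat.find hex) with h0 | hpos
  · rw [h0]; simpa using ht
  · obtain ⟨k, hk⟩ := Nat.exists_eq_succ_of_ne_zero (Nat.pos_iff_ne_zero.mp hpos)
    rw [hk]
    have := Nat.find_min hex (m := k) (by omega)
    exact not_lt.mp this

/-- pathwise bound `|κ_t^{(2)} − κ_t^{(1)}| ≤ max_{0 ≤ m ≤ N_t^{(1)}} Δ_m` for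
two two-type renewal processes sharing the v-durations `(V_n)`. -/
theorem stmt9 (U₁ U₂ V : ℕ → ℝ)
    (hU₁ : ∀ n, 0 < U₁ n) (hU₂ : ∀ n, 0 < U₂ n) (hV : ∀ n, 0 < V n)
    (t : ℝ) (ht : 0 < t) (N₁ : ℕ)
    (hN₁ : (∑ k ∈ range N₁, (U₁ k + V k)) ≤ t ∧
           t < ∑ k ∈ range (N₁ + 1), (U₁ k + V k)) :
    |kappa U₂ V t - kappa U₁ V t|
      ≤ (Finset.range (N₁ + 1)).sup' Finset.nonempty_range_add_one (Delta U₁ U₂) := by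
  set A : ℕ → ℝ := fun n => ∑ k ∈ range n, U₁ k with hA
  set B : ℕ → ℝ := fun n => ∑ k ∈ range n, U₂ k with hB
  set W : ℕ → ℝ := fun n => ∑ k ∈ range n, V k with hW
  have hAmono : ∀ {m n : ℕ}, m ≤ n → A m ≤ A n := fun h =>
    sum_range_mono (fun k => le_of_lt (hU₁ k)) h
  have hBmono : ∀ {m n : ℕ}, m ≤ n → B m ≤ B n := fun h =>
    sum_range_mono (fun k => le_of_lt (hU₂ k)) h
  have hWmono : ∀ {m n : ℕ}, m ≤ n → W m ≤ W n := fun h =>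
    sum_range_mono (fun k => le_of_lt (hV k)) h
  have hC₁ : ∀ n, (∑ k ∈ range n, (U₁ k + V k)) = A n + W n := fun n => by
    simp [hA, hW, Finset.sum_add_distrib]
  have hC₂ : ∀ n, (∑ k ∈ range n, (U₂ k + V k)) = B n + W n := fun n => by
    simp [hB, hW, Finset.sum_add_distrib]
  have h1 : A N₁ + W N₁ ≤ t := by rw [← hC₁]; exact hN₁.1
  have h2 : t < A (N₁ + 1) + W (N₁ + 1) := by rw [← hC₁]; exact hN₁.2
  have hκ₁ : kappa U₁ V t = min (t - W N₁) (A (N₁ + 1)) :=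
    kappa_eq_min hU₁ hV N₁ hN₁.1 hN₁.2
  have k1a : kappa U₁ V t ≤ t - W N₁ := hκ₁ ▸ min_le_left _ _
  have k1b : kappa U₁ V t ≤ A (N₁ + 1) := hκ₁ ▸ min_le_right _ _
  have k1l : A N₁ ≤ kappa U₁ V t := by
    rw [hκ₁]
    exact le_min (by linarith) (hAmono (Nat.le_succ N₁))
  suffices h : ∃ m ≤ N₁, |kappa U₂ V t - kappa U₁ V t| ≤ Delta U₁ U₂ m by
    obtain ⟨m, hm, hle⟩ := h
    exact le_trans hle (Finset.le_sup' (Delta U₁ U₂)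
      (Finset.mem_range.2 (Nat.lt_succ_of_le hm)))
  by_cases hdeg : ∀ n, (∑ k ∈ range n, (U₂ k + V k)) ≤ t
  · -- degenerate case: all of process 2 fits below t
    refine ⟨N₁, le_rfl, ?_⟩
    obtain ⟨d0, dl1, dl2⟩ := Delta_facts hU₁ hU₂ N₁
    have hκ₂ : kappa U₂ V t = ∑' n, U₂ n := kappa_eq_deg hU₂ hV hdeg
    have hsum : Summable U₂ := by
      apply summable_of_sum_range_le (c := t) (fun n => le_of_lt (hU₂ n))
      intro n
      calc ∑ i ∈ range n, U₂ i ≤ ∑ i ∈ range n, (U₂ i + V i) :=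
            Finset.sum_le_sum fun i _ => by linarith [hV i]
        _ ≤ t := hdeg n
    have f3 : B (N₁ + 1) ≤ ∑' n, U₂ n :=
      Summable.sum_le_tsum (range (N₁ + 1)) (fun i _ => le_of_lt (hU₂ i)) hsum
    have f4 : (∑' n, U₂ n) ≤ t - W (N₁ + 1) := by
      apply Summable.tsum_le_of_sum_range_le hsum
      intro n
      have e1 : B (max n (N₁ + 1)) + W (max n (N₁ + 1)) ≤ t := by
        rw [← hC₂]; exact hdeg _
      have e2 : (∑ i ∈ range n, U₂ i) ≤ B (max n (N₁ + 1)) := hBmono (le_max_left _ _)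
      have e3 : W (N₁ + 1) ≤ W (max n (N₁ + 1)) := hWmono (le_max_right _ _)
      linarith
    have hWm : W N₁ ≤ W (N₁ + 1) := hWmono (Nat.le_succ N₁)
    have hBm : B N₁ ≤ B (N₁ + 1) := hBmono (Nat.le_succ N₁)
    rw [hκ₂]
    rw [abs_le]
    constructor
    · -- κ₁ − κ₂ ≤ Δ
      linarith
    · -- κ₂ − κ₁ ≤ Δ : κ₂ ≤ κ₁
      have : (∑' n, U₂ n) ≤ kappa U₁ V t := by
        rw [hκ₁]
        exact le_min (by linarith) (by linarith)
      linarith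
  · push_neg at hdeg
    obtain ⟨N₂, hg1, hg2⟩ := exists_renewal_index (le_of_lt ht) hdeg
    have h3 : B N₂ + W N₂ ≤ t := by rw [← hC₂]; exact hg1
    have h4 : t < B (N₂ + 1) + W (N₂ + 1) := by rw [← hC₂]; exact hg2
    have hκ₂ : kappa U₂ V t = min (t - W N₂) (B (N₂ + 1)) :=
      kappa_eq_min hU₂ hV N₂ hg1 hg2
    have k2a : kappa U₂ V t ≤ t - W N₂ := hκ₂ ▸ min_le_left _ _
    have k2b : kappa U₂ V t ≤ B (N₂ + 1) := hκ₂ ▸ min_le_right _ _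
    have k2l : B N₂ ≤ kappa U₂ V t := by
      rw [hκ₂]
      exact le_min (by linarith) (hBmono (Nat.le_succ N₂))
    rcases lt_or_ge N₂ N₁ with hcase | hcase
    · -- N₂ < N₁, use m = N₂
      refine ⟨N₂, le_of_lt hcase, ?_⟩
      obtain ⟨d0, dl1, dl2⟩ := Delta_facts hU₁ hU₂ N₂
      have hm1 : N₂ + 1 ≤ N₁ := hcase
      have hA1 : A (N₂ + 1) + W (N₂ + 1) ≤ t := by
        have := hAmono hm1
        have := hWmono hm1
        linarith
      have hWs : W N₂ ≤ W (N₂ + 1) := hWmono (Nat.le_succ N₂)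
      have hAs : A N₂ ≤ A (N₂ + 1) := hAmono (Nat.le_succ N₂)
      have k2l' : A (N₂ + 1) ≤ kappa U₂ V t := by
        rw [hκ₂]
        exact le_min (by linarith) (by linarith)
      have k1u : kappa U₁ V t < B (N₂ + 1) := by
        have := hWmono hm1
        linarith
      have k1l' : A (N₂ + 1) ≤ kappa U₁ V t := le_trans (hAmono hm1) k1l
      rw [abs_le]
      constructor <;> linarith
    · -- N₁ ≤ N₂, use m = N₁
      refine ⟨N₁, le_rfl, ?_⟩
      obtain ⟨d0, dl1, dl2⟩ := Delta_facts hU₁ hU₂ N₁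
      have k2l' : B N₁ ≤ kappa U₂ V t := le_trans (hBmono hcase) k2l
      rcases eq_or_lt_of_le hcase with heq | hlt
      · -- N₁ = N₂
        subst heq
        rw [abs_le]
        constructor <;> linarith
      · -- N₁ < N₂
        have hm1 : N₁ + 1 ≤ N₂ := hlt
        have k2u : kappa U₂ V t ≤ t - W (N₁ + 1) := by
          have := hWmono hm1
          linarith
        have hWs : W N₁ ≤ W (N₁ + 1) := hWmono (Nat.le_succ N₁)
        have : kappa U₂ V t ≤ kappa U₁ V t := by
          rw [hκ₁]
          exact le_min (by linarith) (by linarith)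
        rw [abs_le]
        constructor <;> linarith
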